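/- For any nonzero vector k ∈ ℝ⁴, the set W of antisymmetric maps F : Fin 4 → Fin 4 → ℝ (i.e. F a b = -F b a) satisfying Σ_b F a b * k b = 0 for every a is a linear subspace of dimension 3 of the space of antisymmetric 4×4 real arrays. -/

import Mathlib

open Finset

noncomputable section BivAux

/-- The space of antisymmetric 4×4 arrays. -/
def asym4 : Submodule ℝ (Fin 4 → Fin 4 → ℝ) where
  carrier := {F | ∀ a b, F a b = -F b a}
  add_mem' := by
    intro F G hF hG a b
    show F a b + G a b = -(F b a + G b a)
    rw [hF a b, hG a b]; ring
  zero_mem' := by intro a b; simp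
  smul_mem' := by
    intro c F hF a b
    show c * F a b = -(c * F b a)
    rw [hF a b]; ring

def mk6 (v : Fin 6 → ℝ) : Fin 4 → Fin 4 → ℝ :=
  ![![0, v 0, v 1, v 2], ![-v 0, 0, v 3, v 4], ![-v 1, -v 3, 0, v 5], ![-v 2, -v 4, -v 5, 0]]

lemma mk6_mem (v : Fin 6 → ℝ) : mk6 v ∈ asym4 := by
  intro a b
  fin_cases a <;> fin_cases b <;> simp [mk6]

/-- `asym4` is linearly equivalent to `ℝ⁶`. -/
def asymEquiv : (Fin 6 → ℝ) ≃ₗ[ℝ] asym4 where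
  toFun v := ⟨mk6 v, mk6_mem v⟩
  invFun F := ![F.1 0 1, F.1 0 2, F.1 0 3, F.1 1 2, F.1 1 3, F.1 2 3]
  map_add' v w := by
    ext a b
    fin_cases a <;> fin_cases b <;> simp [mk6] <;> ring
  map_smul' c v := by
    ext a b
    fin_cases a <;> fin_cases b <;> simp [mk6] <;> ring
  left_inv v := by
    funext i
    fin_cases i <;> rfl
  right_inv := by
    rintro ⟨F, hF⟩
    ext a b
    have h0 : ∀ a, F a a = 0 := by
      intro a; have := hF a a; linarith
    fin_cases a <;> fin_cases b <;>
      first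
        | rfl
        | simp [mk6, Matrix.cons_val_succ, show ((5:Fin 6)) = (4:Fin 5).succ from rfl, h0, hF 1 0, hF 2 0, hF 3 0, hF 2 1, hF 3 1, hF 3 2]

lemma finrank_asym4 : Module.finrank ℝ asym4 = 6 := by
  rw [← asymEquiv.finrank_eq]
  simp

variable (k : Fin 4 → ℝ)

/-- Contraction with `k` as a linear map on `asym4`. -/
def Lk : asym4 →ₗ[ℝ] (Fin 4 → ℝ) where
  toFun F a := ∑ b, F.1 a b * k b
  map_add' F G := by
    funext a
    show ∑ b, (F.1 a b + G.1 a b) * k b = _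
    simp [add_mul, Finset.sum_add_distrib]
  map_smul' c F := by
    funext a
    show ∑ b, (c * F.1 a b) * k b = c * ∑ b, F.1 a b * k b
    rw [Finset.mul_sum]
    exact Finset.sum_congr rfl fun b _ => by ring

/-- The hyperplane orthogonal to `k`. -/
def hypk : (Fin 4 → ℝ) →ₗ[ℝ] ℝ where
  toFun v := ∑ i, v i * k i
  map_add' v w := by simp [add_mul, Finset.sum_add_distrib]
  map_smul' c v := by
    simp [Finset.mul_sum]
    exact Finset.sum_congr rfl fun b _ => by ring

lemma range_Lk (hk0 : k ≠ 0) : LinearMap.range (Lk k) = LinearMap.ker (hypk k) := by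
  ext v
  simp only [LinearMap.mem_range, LinearMap.mem_ker]
  constructor
  · rintro ⟨⟨F, hF⟩, rfl⟩
    show ∑ a, (∑ b, F a b * k b) * k a = 0
    have : ∑ a, (∑ b, F a b * k b) * k a = ∑ a, ∑ b, F a b * k b * k a := by
      exact Finset.sum_congr rfl fun a _ => by rw [Finset.sum_mul]
    rw [this]
    have h2 : ∑ a, ∑ b, F a b * k b * k a = -∑ a, ∑ b, F a b * k b * k a := by
      nth_rewrite 2 [Finset.sum_comm]
      rw [← Finset.sum_neg_distrib]
      refine Finset.sum_congr rfl fun a _ => ?_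
      rw [← Finset.sum_neg_distrib]
      refine Finset.sum_congr rfl fun b _ => ?_
      rw [hF a b]; ring
    linarith
  · intro hv
    have hv' : ∑ i, v i * k i = 0 := hv
    have hc : (∑ i, k i * k i) ≠ 0 := by
      have : 0 < ∑ i, k i * k i := by
        have h1 : ∀ i ∈ Finset.univ, (0:ℝ) ≤ k i * k i := fun i _ => mul_self_nonneg _
        obtain ⟨j, hj⟩ : ∃ j, k j ≠ 0 := by
          by_contra h
          push_neg at h
          exact hk0 (funext h)
        exact Finset.sum_pos' h1 ⟨j, Finset.mem_univ j, mul_self_pos.mpr hj⟩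
      linarith
    set c := ∑ i, k i * k i with hcdef
    refine ⟨⟨fun a b => (v a * k b - k a * v b) / c, ?_⟩, ?_⟩
    · intro a b; ring
    · funext a
      show ∑ b, (v a * k b - k a * v b) / c * k b = v a
      have h1 : ∑ b, (v a * k b - k a * v b) / c * k b
          = (∑ b, (v a * k b - k a * v b) * k b) / c := by
        rw [Finset.sum_div]
        exact Finset.sum_congr rfl fun b _ => by ring
      have h2 : ∑ b, (v a * k b - k a * v b) * k b
          = v a * (∑ b, k b * k b) - k a * (∑ b, v b * k b) := by
        rw [Finset.mul_sum, Finset.mul_sum, ← Finset.sum_sub_distrib]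
        exact Finset.sum_congr rfl fun b _ => by ring
      rw [h1, h2, hv', ← hcdef]
      field_simp
      ring

end BivAux

theorem bivectors_annihilating_vector_dim_three
    (k : Fin 4 → ℝ) (hk : k ≠ 0) :
    ∃ W : Submodule ℝ (Fin 4 → Fin 4 → ℝ),
      (W : Set (Fin 4 → Fin 4 → ℝ)) =
        {F | (∀ a b, F a b = -F b a) ∧ ∀ a, ∑ b : Fin 4, F a b * k b = 0} ∧
      Module.finrank ℝ W = 3 := by
  refine ⟨(LinearMap.ker (Lk k)).map asym4.subtype, ?_, ?_⟩
  · ext F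
    simp only [Submodule.map_coe, Set.mem_image, SetLike.mem_coe, Set.mem_setOf_eq,
      LinearMap.mem_ker]
    constructor
    · rintro ⟨⟨G, hG⟩, hker, rfl⟩
      refine ⟨hG, fun a => ?_⟩
      have := congrFun hker a
      exact this
    · rintro ⟨hanti, hsum⟩
      exact ⟨⟨F, hanti⟩, funext fun a => hsum a, rfl⟩
  · rw [Submodule.finrank_map_subtype_eq]
    have hrn := LinearMap.finrank_range_add_finrank_ker (Lk k)
    rw [finrank_asym4, range_Lk k hk] at hrn
    -- finrank ker (hypk k) = 3
    have hφ := LinearMap.finrank_range_add_finrank_ker (hypk k)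
    have h4 : Module.finrank ℝ (Fin 4 → ℝ) = 4 := by simp
    rw [h4] at hφ
    have hrange : LinearMap.range (hypk k) = ⊤ := by
      have hkk : hypk k k ≠ 0 := by
        show (∑ i, k i * k i) ≠ 0
        have : 0 < ∑ i, k i * k i := by
          have h1 : ∀ i ∈ Finset.univ, (0:ℝ) ≤ k i * k i := fun i _ => mul_self_nonneg _
          obtain ⟨j, hj⟩ : ∃ j, k j ≠ 0 := by
            by_contra h
            push_neg at h
            exact hk (funext h)
          exact Finset.sum_pos' h1 ⟨j, Finset.mem_univ j, mul_self_pos.mpr hj⟩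
        linarith
      rw [eq_top_iff]
      intro r _
      refine ⟨(r / hypk k k) • k, ?_⟩
      rw [map_smul]
      field_simp
      exact div_mul_cancel₀ r hkk
    rw [hrange] at hφ
    rw [finrank_top, Module.finrank_self] at hφ
    omega
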